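/- For any λ > 0, x > 1 and 0 ≤ y < x, f_λ(x,y) ≤ (1/λ)[1 - ((x-1)/x)^{λ/r}]. -/

import Mathlib

open Real Set Filter Topology intervalIntegral

theorem stmt_3 (r : ℝ) (hr : 0 < r) (lam : ℝ) (hlam : 0 < lam)
    (x y : ℝ) (hx : 1 < x) (hy0 : 0 ≤ y) (hy : y < x) :
    ((x - 1) ^ (lam / r) / r) *
      ∫ u in (0:ℝ)..(min (y / x) 1), u ^ (lam / r) * (y - u) ^ (-(lam / r) - 1)
      ≤ (1 / lam) * (1 - ((x - 1) / x) ^ (lam / r)) := by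
  set c := lam / r with hc_def
  have hc : 0 < c := div_pos hlam hr
  have hx0 : (0:ℝ) < x := lt_trans one_pos hx
  have hx1 : (0:ℝ) < x - 1 := by linarith
  have hfrac1 : ((x - 1) / x) ^ c ≤ 1 :=
    Real.rpow_le_one (by positivity) (by rw [div_le_one hx0]; linarith) hc.le
  rcases eq_or_lt_of_le hy0 with hy0' | hy0'
  · -- y = 0 : integral is over [0,0]
    rw [← hy0']
    simp only [zero_div, min_eq_left (zero_le_one' ℝ), intervalIntegral.integral_same, mul_zero]
    have : (0:ℝ) ≤ 1 - ((x - 1) / x) ^ c := by linarith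
    positivity
  · -- y > 0
    set b := y / x with hb_def
    have hb0 : 0 < b := div_pos hy0' hx0
    have hbx : b < 1 := (div_lt_one hx0).mpr hy
    have hmin : min b 1 = b := min_eq_left hbx.le
    have hby : b < y := div_lt_self hy0' hx
    have hyb : 0 < y - b := by linarith
    rw [hmin]
    set f : ℝ → ℝ := fun u => u ^ c * (y - u) ^ (-c - 1) with hf_def
    -- continuity of f on [0,b]
    have hfcont : ContinuousOn f (Icc 0 b) := by
      apply ContinuousOn.mul
      · exact continuousOn_id.rpow_const fun u _ => Or.inr hc.le
      · apply ContinuousOn.rpow_const (continuousOn_const.sub continuousOn_id)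
        intro u hu
        exact Or.inl (by rcases hu with ⟨_, h2⟩; exact (show (0:ℝ) < y - u by linarith).ne')
    have hfint : ∀ a₁ a₂ : ℝ, 0 ≤ a₁ → a₁ ≤ a₂ → a₂ ≤ b →
        IntervalIntegrable f MeasureTheory.volume a₁ a₂ := by
      intro a₁ a₂ h0 h12 h2b
      apply ContinuousOn.intervalIntegrable
      apply hfcont.mono
      rw [uIcc_of_le h12]
      exact Icc_subset_Icc h0 h2b
    set Gb : ℝ := (1 / c) * ((x - 1) ^ (-c) - x ^ (-c)) with hGb_def
    set G : ℝ → ℝ := fun u => (1 / c) * (u ^ c * (y - u) ^ (-c) - u ^ c * y ^ (-c)) with hG_def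
    set C : ℝ := (y - b) ^ (-c - 1) / (c + 1) with hC_def
    have hC : 0 ≤ C := by positivity
    -- key inequality: ∫_0^b f ≤ Gb
    have key : (∫ u in (0:ℝ)..b, f u) ≤ Gb := by
      have hev : ∀ᶠ ε in 𝓝[>] (0:ℝ), (∫ u in (0:ℝ)..b, f u) ≤ Gb + C * ε ^ (c + 1) := by
        filter_upwards [Ioc_mem_nhdsGT_of_mem (by constructor <;> simp [hb0] : (0:ℝ) ∈ Ico (0:ℝ) b)]
        intro ε hε
        obtain ⟨hε0, hεb⟩ := hε
        have hyε : 0 < y - ε := by linarith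
        -- split the integral
        have hsplit : (∫ u in (0:ℝ)..b, f u)
            = (∫ u in (0:ℝ)..ε, f u) + ∫ u in ε..b, f u :=
          (intervalIntegral.integral_add_adjacent_intervals
            (hfint 0 ε le_rfl hε0.le hεb) (hfint ε b hε0.le hεb le_rfl)).symm
        -- bound on [0, ε]
        have hbound1 : (∫ u in (0:ℝ)..ε, f u) ≤ C * ε ^ (c + 1) := by
          have hmono : (∫ u in (0:ℝ)..ε, f u)
              ≤ ∫ u in (0:ℝ)..ε, (y - b) ^ (-c - 1) * u ^ c := by
            apply intervalIntegral.integral_mono_on hε0.le (hfint 0 ε le_rfl hε0.le hεb)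
            · apply ContinuousOn.intervalIntegrable
              exact continuousOn_const.mul (continuousOn_id.rpow_const fun u _ => Or.inr hc.le)
            · intro u hu
              obtain ⟨hu0, huε⟩ := hu
              have h1 : (y - u) ^ (-c - 1) ≤ (y - b) ^ (-c - 1) :=
                Real.rpow_le_rpow_of_nonpos hyb (by linarith) (by linarith)
              have h2 : (0:ℝ) ≤ u ^ c := Real.rpow_nonneg hu0 c
              calc u ^ c * (y - u) ^ (-c - 1) ≤ u ^ c * (y - b) ^ (-c - 1) :=
                    mul_le_mul_of_nonneg_left h1 h2
                _ = (y - b) ^ (-c - 1) * u ^ c := by ring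
          rw [intervalIntegral.integral_const_mul, integral_rpow (Or.inl (by linarith))] at hmono
          rw [Real.zero_rpow (by positivity : c + 1 ≠ 0)] at hmono
          calc (∫ u in (0:ℝ)..ε, f u)
              ≤ (y - b) ^ (-c - 1) * ((ε ^ (c + 1) - 0) / (c + 1)) := hmono
            _ = C * ε ^ (c + 1) := by rw [hC_def]; ring
        -- bound on [ε, b] via FTC
        have hbound2 : (∫ u in ε..b, f u) ≤ G b - G ε := by
          set G' : ℝ → ℝ := fun u =>
            u ^ c * (y - u) ^ (-c - 1) + u ^ (c - 1) * ((y - u) ^ (-c) - y ^ (-c)) with hG'_def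
          have hderiv : ∀ u ∈ uIcc ε b, HasDerivAt G (G' u) u := by
            intro u hu
            rw [uIcc_of_le hεb] at hu
            obtain ⟨huε, hub⟩ := hu
            have hu0 : 0 < u := lt_of_lt_of_le hε0 huε
            have hyu : 0 < y - u := by linarith
            have d1 : HasDerivAt (fun u : ℝ => u ^ c) (c * u ^ (c - 1)) u :=
              Real.hasDerivAt_rpow_const (Or.inl hu0.ne')
            have d2 : HasDerivAt (fun u : ℝ => (y - u) ^ (-c))
                ((-1) * (-c) * (y - u) ^ (-c - 1)) u := by
              have dsub : HasDerivAt (fun u : ℝ => y - u) (-1) u := by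
                simpa using (hasDerivAt_id u).const_sub y
              have := dsub.rpow_const (p := -c) (Or.inl hyu.ne')
              exact this
            have d3 : HasDerivAt (fun u : ℝ => u ^ c * (y - u) ^ (-c))
                (c * u ^ (c - 1) * (y - u) ^ (-c) + u ^ c * ((-1) * (-c) * (y - u) ^ (-c - 1))) u :=
              d1.mul d2
            have d4 : HasDerivAt (fun u : ℝ => u ^ c * y ^ (-c))
                (c * u ^ (c - 1) * y ^ (-c)) u := d1.mul_const _
            have d5 := ((d3.sub d4).const_mul (1 / c))
            refine d5.congr_deriv ?_
            rw [hG'_def]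
            field_simp
            ring
          have hG'int : IntervalIntegrable G' MeasureTheory.volume ε b := by
            apply ContinuousOn.intervalIntegrable
            rw [uIcc_of_le hεb]
            have hne1 : ∀ u ∈ Icc ε b, u ≠ 0 := fun u hu =>
              (lt_of_lt_of_le hε0 hu.1).ne'
            have hne2 : ∀ u ∈ Icc ε b, y - u ≠ 0 := fun u hu => by
              have := hu.2; nlinarith
            apply ContinuousOn.add
            · exact (continuousOn_id.rpow_const fun u _ => Or.inr hc.le).mul
                (((continuousOn_const.sub continuousOn_id).rpow_const)
                  fun u hu => Or.inl (by simpa using hne2 u hu))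
            · apply ContinuousOn.mul
              · exact continuousOn_id.rpow_const fun u hu => Or.inl (by simpa using hne1 u hu)
              · apply ContinuousOn.sub
                · exact ((continuousOn_const.sub continuousOn_id).rpow_const)
                    fun u hu => Or.inl (by simpa using hne2 u hu)
                · exact continuousOn_const
          have hFTC : (∫ u in ε..b, G' u) = G b - G ε :=
            intervalIntegral.integral_eq_sub_of_hasDerivAt hderiv hG'int
          rw [← hFTC]
          apply intervalIntegral.integral_mono_on hεb (hfint ε b hε0.le hεb le_rfl) hG'int
          intro u hu
          obtain ⟨huε, hub⟩ := hu
          have hu0 : 0 < u := lt_of_lt_of_le hε0 huε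
          have hyu : 0 < y - u := by linarith
          have h1 : y ^ (-c) ≤ (y - u) ^ (-c) :=
            Real.rpow_le_rpow_of_nonpos hyu (by linarith) (by linarith)
          have h2 : 0 ≤ u ^ (c - 1) * ((y - u) ^ (-c) - y ^ (-c)) :=
            mul_nonneg (Real.rpow_nonneg hu0.le _) (by linarith)
          simp only [hf_def, hG'_def]
          linarith
        -- G ε ≥ 0
        have hGε : 0 ≤ G ε := by
          have h1 : y ^ (-c) ≤ (y - ε) ^ (-c) :=
            Real.rpow_le_rpow_of_nonpos hyε (by linarith) (by linarith)
          have h2 : ε ^ c * y ^ (-c) ≤ ε ^ c * (y - ε) ^ (-c) :=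
            mul_le_mul_of_nonneg_left h1 (Real.rpow_nonneg hε0.le c)
          simp only [hG_def]
          have : (0:ℝ) ≤ 1 / c := by positivity
          nlinarith
        -- G b = Gb
        have hGbeq : G b = Gb := by
          have hybe : y - b = y * (x - 1) / x := by
            rw [hb_def]; field_simp
          have e1 : b ^ c * (y - b) ^ (-c) = (x - 1) ^ (-c) := by
            rw [hybe, hb_def, Real.rpow_neg (by positivity), Real.rpow_neg hx1.le,
              Real.div_rpow hy0'.le hx0.le, Real.div_rpow (by positivity) hx0.le,
              Real.mul_rpow hy0'.le hx1.le]
            have hy_c : (0:ℝ) < y ^ c := Real.rpow_pos_of_pos hy0' c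
            have hx_c : (0:ℝ) < x ^ c := Real.rpow_pos_of_pos hx0 c
            have hx1_c : (0:ℝ) < (x - 1) ^ c := Real.rpow_pos_of_pos hx1 c
            field_simp
          have e2 : b ^ c * y ^ (-c) = x ^ (-c) := by
            rw [hb_def, Real.rpow_neg hy0'.le, Real.rpow_neg hx0.le,
              Real.div_rpow hy0'.le hx0.le]
            have hy_c : (0:ℝ) < y ^ c := Real.rpow_pos_of_pos hy0' c
            have hx_c : (0:ℝ) < x ^ c := Real.rpow_pos_of_pos hx0 c
            field_simp
          simp only [hG_def, hGb_def, e1, e2]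
        calc (∫ u in (0:ℝ)..b, f u)
            = (∫ u in (0:ℝ)..ε, f u) + ∫ u in ε..b, f u := hsplit
          _ ≤ C * ε ^ (c + 1) + (G b - G ε) := add_le_add hbound1 hbound2
          _ ≤ C * ε ^ (c + 1) + G b := by linarith
          _ = Gb + C * ε ^ (c + 1) := by rw [hGbeq]; ring
      have htend : Tendsto (fun ε : ℝ => Gb + C * ε ^ (c + 1)) (𝓝[>] (0:ℝ)) (𝓝 Gb) := by
        have h1 : Tendsto (fun ε : ℝ => ε ^ (c + 1)) (𝓝 (0:ℝ)) (𝓝 0) := by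
          have := (Real.continuousAt_rpow_const 0 (c + 1) (Or.inr (by positivity))).tendsto
          simpa [Real.zero_rpow (by positivity : c + 1 ≠ 0)] using this
        have h2 : Tendsto (fun ε : ℝ => Gb + C * ε ^ (c + 1)) (𝓝 (0:ℝ)) (𝓝 (Gb + C * 0)) :=
          tendsto_const_nhds.add (tendsto_const_nhds.mul h1)
        simpa using h2.mono_left nhdsWithin_le_nhds
      exact ge_of_tendsto htend hev
    -- conclude
    have hfinal : ((x - 1) ^ c / r) * Gb = (1 / lam) * (1 - ((x - 1) / x) ^ c) := by
      have hlam_eq : lam = c * r := by rw [hc_def]; field_simp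
      rw [hGb_def, hlam_eq, Real.rpow_neg hx1.le, Real.rpow_neg hx0.le,
        Real.div_rpow hx1.le hx0.le]
      have hx_c : (0:ℝ) < x ^ c := Real.rpow_pos_of_pos hx0 c
      have hx1_c : (0:ℝ) < (x - 1) ^ c := Real.rpow_pos_of_pos hx1 c
      field_simp
    calc ((x - 1) ^ c / r) * ∫ u in (0:ℝ)..b, f u
        ≤ ((x - 1) ^ c / r) * Gb := mul_le_mul_of_nonneg_left key (by positivity)
      _ = (1 / lam) * (1 - ((x - 1) / x) ^ c) := hfinal
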